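/- Let u₁,v₁,…,u₆,v₆ ∈ F₃^*. The graph Λ_{8,3} has a cycle of type (u₁,v₁,…,u₆,v₆) (a 12-cycle through the doubly-zero edge with these color differences) if and only if there exist a, c ∈ F₃^* with (u₁,v₁,…,u₆,v₆) = (a,c,−a,−c,a,c,−a,−c,a,c,−a,−c). -/

import Mathlib

/-- Vertices of one side of the graph `Λ(k,q)`: tuples of `k+1` elements of `F`,
modelled as functions `ℕ → F` vanishing above index `k`. -/
abbrev PVec (F : Type*) [Zero F] (k : ℕ) : Type _ := {f : ℕ → F // ∀ i, k < i → f i = 0}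

/-- Adjacency condition between a left vertex `[l]` (with `l 1 = l 2`) and a right
vertex `⟨r⟩` (with `r 1 = 0`) in `Λ(k,q)`: for `2 ≤ i ≤ k`,
`l i + r i = r 0 * l (i-2)` if `i ≡ 2, 3 (mod 4)` and
`l i + r i = l 0 * r (i-2)` if `i ≡ 0, 1 (mod 4)`. -/
def lamAdjLR {F : Type*} [Field F] (k : ℕ) (l r : ℕ → F) : Prop :=
  l 1 = l 2 ∧ r 1 = 0 ∧ ∀ i, 2 ≤ i → i ≤ k →
    ((i % 4 = 2 ∨ i % 4 = 3) → l i + r i = r 0 * l (i - 2)) ∧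
    ((i % 4 = 0 ∨ i % 4 = 1) → l i + r i = l 0 * r (i - 2))

/-- The bipartite graph `Λ(k,q)` (the graph `Λ_{k,q}` of the paper, isomorphic to `D(k,q)`). -/
def LambdaGraph (F : Type*) [Field F] (k : ℕ) : SimpleGraph (PVec F k ⊕ PVec F k) where
  Adj x y := match x, y with
    | Sum.inl l, Sum.inr r => lamAdjLR k l.1 r.1
    | Sum.inr r, Sum.inl l => lamAdjLR k l.1 r.1
    | _, _ => False
  symm := ⟨by rintro (l | r) (l' | r') h <;> exact h⟩
  loopless := ⟨by rintro (l | r) h <;> exact h⟩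

/-- `hasCycleOfType F k n u v` : the graph `Λ(k,q)` has a cycle of length `2n` of type
`(u 1, v 1, …, u n, v n)`, i.e. a `2n`-cycle starting with the all-zero left vertex and the
all-zero right vertex, whose left colors `x i` and right colors `y i` have successive
differences `u i = x (i+1) - x i` and `v i = y (i+1) - y i`. -/
def hasCycleOfType (F : Type*) [Field F] (k n : ℕ) (u v : ℕ → F) : Prop :=
  ∃ L R : ℕ → PVec F k,
    (∀ m, (L 1).1 m = 0) ∧ (∀ m, (R 1).1 m = 0) ∧
    L (n + 1) = L 1 ∧ R (n + 1) = R 1 ∧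
    (∀ i, 1 ≤ i → i ≤ n → (LambdaGraph F k).Adj (Sum.inl (L i)) (Sum.inr (R i))) ∧
    (∀ i, 1 ≤ i → i ≤ n → (LambdaGraph F k).Adj (Sum.inr (R i)) (Sum.inl (L (i + 1)))) ∧
    (∀ i j, 1 ≤ i → i < j → j ≤ n → L i ≠ L j) ∧
    (∀ i j, 1 ≤ i → i < j → j ≤ n → R i ≠ R j) ∧
    (∀ i, 1 ≤ i → i ≤ n → u i = (L (i + 1)).1 0 - (L i).1 0) ∧
    (∀ i, 1 ≤ i → i ≤ n → v i = (R (i + 1)).1 0 - (R i).1 0)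

namespace L83

abbrev F3 := ZMod 3

def stepR (l : ℕ → F3) (y : F3) : ℕ → F3 := fun m =>
  match m with
  | 0 => y | 1 => 0
  | 2 => y * l 0 - l 2 | 3 => y * l 1 - l 3
  | 4 => l 0 * (y * l 0 - l 2) - l 4 | 5 => l 0 * (y * l 1 - l 3) - l 5
  | 6 => y * l 4 - l 6 | 7 => y * l 5 - l 7
  | 8 => l 0 * (y * l 4 - l 6) - l 8 | _ => 0

def stepL (r : ℕ → F3) (x : F3) : ℕ → F3 := fun m =>
  match m with
  | 0 => x | 1 => r 0 * x - r 2 | 2 => r 0 * x - r 2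
  | 3 => r 0 * (r 0 * x - r 2) - r 3
  | 4 => x * r 2 - r 4 | 5 => x * r 3 - r 5
  | 6 => r 0 * (x * r 2 - r 4) - r 6 | 7 => r 0 * (x * r 3 - r 5) - r 7
  | 8 => x * r 6 - r 8 | _ => 0

def wL (x y : ℕ → F3) : ℕ → ℕ → F3
  | 0 => fun _ => 0
  | 1 => fun _ => 0
  | (i+2) => stepL (stepR (wL x y (i+1)) (y (i+1))) (x (i+2))

def wR (x y : ℕ → F3) (i : ℕ) : ℕ → F3 := stepR (wL x y i) (y i)

lemma stepR_van (l : ℕ → F3) (y : F3) : ∀ m, 8 < m → stepR l y m = 0 := by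
  intro m hm
  match m, hm with
  | (m+9), _ => rfl

lemma stepL_van (r : ℕ → F3) (x : F3) : ∀ m, 8 < m → stepL r x m = 0 := by
  intro m hm
  match m, hm with
  | (m+9), _ => rfl

lemma wL_van (x y : ℕ → F3) : ∀ i m, 8 < m → wL x y i m = 0 := by
  intro i
  match i with
  | 0 => intro m _; rfl
  | 1 => intro m _; rfl
  | (i+2) => exact stepL_van _ _

lemma wR_van (x y : ℕ → F3) (i : ℕ) : ∀ m, 8 < m → wR x y i m = 0 :=
  stepR_van _ _

lemma wL_one_two (x y : ℕ → F3) : ∀ i, wL x y i 1 = wL x y i 2 := by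
  intro i
  match i with
  | 0 => rfl
  | 1 => rfl
  | (i+2) => rfl

/-- adjacency from a left vertex to its right neighbour -/
lemma adjR (l : ℕ → F3) (y : F3) (h : l 1 = l 2) : lamAdjLR 8 l (stepR l y) := by
  refine ⟨h, rfl, fun i h2 h8 => ⟨fun hm => ?_, fun hm => ?_⟩⟩ <;>
    interval_cases i <;> first | omega | (simp only [stepR]; ring)

lemma adjL (r : ℕ → F3) (x : F3) (h : r 1 = 0) : lamAdjLR 8 (stepL r x) r := by
  refine ⟨rfl, h, fun i h2 h8 => ⟨fun hm => ?_, fun hm => ?_⟩⟩ <;>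
    interval_cases i <;> first | omega | (simp only [stepL]; ring)

/-- a right neighbour is determined by the left vertex and its colour -/
lemma right_eq (l r : ℕ → F3) (h : lamAdjLR 8 l r) (hv : ∀ m, 8 < m → r m = 0) :
    ∀ m, r m = stepR l (r 0) m := by
  obtain ⟨h12, h10, he⟩ := h
  have e2 := (he 2 (by norm_num) (by norm_num)).1 (by omega)
  have e3 := (he 3 (by norm_num) (by norm_num)).1 (by omega)
  have e4 := (he 4 (by norm_num) (by norm_num)).2 (by omega)
  have e5 := (he 5 (by norm_num) (by norm_num)).2 (by omega)
  have e6 := (he 6 (by norm_num) (by norm_num)).1 (by omega)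
  have e7 := (he 7 (by norm_num) (by norm_num)).1 (by omega)
  have e8 := (he 8 (by norm_num) (by norm_num)).2 (by omega)
  norm_num at e2 e3 e4 e5 e6 e7 e8
  intro m
  match m with
  | 0 => rfl
  | 1 => exact h10
  | 2 => show r 2 = r 0 * l 0 - l 2; linear_combination e2
  | 3 => show r 3 = r 0 * l 1 - l 3; linear_combination e3
  | 4 => show r 4 = l 0 * (r 0 * l 0 - l 2) - l 4; linear_combination e4 + l 0 * e2
  | 5 => show r 5 = l 0 * (r 0 * l 1 - l 3) - l 5; linear_combination e5 + l 0 * e3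
  | 6 => show r 6 = r 0 * l 4 - l 6; linear_combination e6
  | 7 => show r 7 = r 0 * l 5 - l 7; linear_combination e7
  | 8 => show r 8 = l 0 * (r 0 * l 4 - l 6) - l 8; linear_combination e8 + l 0 * e6
  | (m+9) => exact hv _ (by omega)

/-- a left vertex is determined by its right neighbour and its colour -/
lemma left_eq (l r : ℕ → F3) (h : lamAdjLR 8 l r) (hv : ∀ m, 8 < m → l m = 0) :
    ∀ m, l m = stepL r (l 0) m := by
  obtain ⟨h12, h10, he⟩ := h
  have e2 := (he 2 (by norm_num) (by norm_num)).1 (by omega)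
  have e3 := (he 3 (by norm_num) (by norm_num)).1 (by omega)
  have e4 := (he 4 (by norm_num) (by norm_num)).2 (by omega)
  have e5 := (he 5 (by norm_num) (by norm_num)).2 (by omega)
  have e6 := (he 6 (by norm_num) (by norm_num)).1 (by omega)
  have e7 := (he 7 (by norm_num) (by norm_num)).1 (by omega)
  have e8 := (he 8 (by norm_num) (by norm_num)).2 (by omega)
  norm_num at e2 e3 e4 e5 e6 e7 e8
  intro m
  match m with
  | 0 => rfl
  | 1 => show l 1 = r 0 * l 0 - r 2; linear_combination h12 + e2
  | 2 => show l 2 = r 0 * l 0 - r 2; linear_combination e2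
  | 3 => show l 3 = r 0 * (r 0 * l 0 - r 2) - r 3
         linear_combination e3 + r 0 * h12 + r 0 * e2
  | 4 => show l 4 = l 0 * r 2 - r 4; linear_combination e4
  | 5 => show l 5 = l 0 * r 3 - r 5; linear_combination e5
  | 6 => show l 6 = r 0 * (l 0 * r 2 - r 4) - r 6; linear_combination e6 + r 0 * e4
  | 7 => show l 7 = r 0 * (l 0 * r 3 - r 5) - r 7; linear_combination e7 + r 0 * e5
  | 8 => show l 8 = l 0 * r 6 - r 8; linear_combination e8
  | (m+9) => exact hv _ (by omega)

/-! ### Mirror of the walk over `ℕ` (fast kernel arithmetic) -/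

def nsub (a b : ℕ) : ℕ := (a + 2 * b) % 3
def nmul (a b : ℕ) : ℕ := (a * b) % 3

def nstepR (l : ℕ → ℕ) (y : ℕ) : ℕ → ℕ := fun m =>
  match m with
  | 0 => y | 1 => 0
  | 2 => nsub (nmul y (l 0)) (l 2)
  | 3 => nsub (nmul y (l 1)) (l 3)
  | 4 => nsub (nmul (l 0) (nsub (nmul y (l 0)) (l 2))) (l 4)
  | 5 => nsub (nmul (l 0) (nsub (nmul y (l 1)) (l 3))) (l 5)
  | 6 => nsub (nmul y (l 4)) (l 6)
  | 7 => nsub (nmul y (l 5)) (l 7)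
  | 8 => nsub (nmul (l 0) (nsub (nmul y (l 4)) (l 6))) (l 8)
  | _ => 0

def nstepL (r : ℕ → ℕ) (x : ℕ) : ℕ → ℕ := fun m =>
  match m with
  | 0 => x
  | 1 => nsub (nmul (r 0) x) (r 2)
  | 2 => nsub (nmul (r 0) x) (r 2)
  | 3 => nsub (nmul (r 0) (nsub (nmul (r 0) x) (r 2))) (r 3)
  | 4 => nsub (nmul x (r 2)) (r 4)
  | 5 => nsub (nmul x (r 3)) (r 5)
  | 6 => nsub (nmul (r 0) (nsub (nmul x (r 2)) (r 4))) (r 6)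
  | 7 => nsub (nmul (r 0) (nsub (nmul x (r 3)) (r 5))) (r 7)
  | 8 => nsub (nmul x (r 6)) (r 8)
  | _ => 0

def nwL (x y : ℕ → ℕ) : ℕ → ℕ → ℕ
  | 0 => fun _ => 0
  | 1 => fun _ => 0
  | (i+2) => nstepL (nstepR (nwL x y (i+1)) (y (i+1))) (x (i+2))

def nwR (x y : ℕ → ℕ) (i : ℕ) : ℕ → ℕ := nstepR (nwL x y i) (y i)

lemma val_sub3 : ∀ a b : F3, (a - b).val = nsub a.val b.val := by decide
lemma val_mul3 : ∀ a b : F3, (a * b).val = nmul a.val b.val := by decide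
lemma val_zero3 : ∀ a : F3, a.val = 0 → a = 0 := by decide
lemma val_ne3 : ∀ a : F3, a ≠ 0 → a.val ≠ 0 := by decide
lemma val_inj3 : ∀ a b : F3, a.val = b.val → a = b := by decide

lemma nstepR_val (l : ℕ → F3) (l' : ℕ → ℕ) (hl : ∀ i, l' i = (l i).val) (y : F3) :
    ∀ m, nstepR l' y.val m = (stepR l y m).val := by
  intro m
  rcases m with _|_|_|_|_|_|_|_|_|m <;>
    first
      | rfl
      | simp only [nstepR, stepR, val_sub3, val_mul3, hl]

lemma nstepL_val (r : ℕ → F3) (r' : ℕ → ℕ) (hr : ∀ i, r' i = (r i).val) (x : F3) :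
    ∀ m, nstepL r' x.val m = (stepL r x m).val := by
  intro m
  rcases m with _|_|_|_|_|_|_|_|_|m <;>
    first
      | rfl
      | simp only [nstepL, stepL, val_sub3, val_mul3, hr]

lemma nwL_val (x y : ℕ → F3) (x' y' : ℕ → ℕ)
    (hx : ∀ i, x' i = (x i).val) (hy : ∀ i, y' i = (y i).val) :
    ∀ i m, nwL x' y' i m = (wL x y i m).val := by
  intro i
  induction i with
  | zero => intro m; rfl
  | succ n ih =>
    rcases n with _ | k
    · intro m; rfl
    · intro m
      show nstepL (nstepR (nwL x' y' (k+1)) (y' (k+1))) (x' (k+2)) m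
         = (stepL (stepR (wL x y (k+1)) (y (k+1))) (x (k+2)) m).val
      rw [hx (k+2)]
      refine nstepL_val _ _ (fun i => ?_) _ m
      rw [hy (k+1)]
      exact nstepR_val _ _ ih _ i

lemma nwR_val (x y : ℕ → F3) (x' y' : ℕ → ℕ)
    (hx : ∀ i, x' i = (x i).val) (hy : ∀ i, y' i = (y i).val) :
    ∀ i m, nwR x' y' i m = (wR x y i m).val := by
  intro i m
  show nstepR (nwL x' y' i) (y' i) m = (stepR (wL x y i) (y i) m).val
  rw [hy i]
  exact nstepR_val _ _ (nwL_val x y x' y' hx hy i) _ m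

def gX (a b c d e : ℕ) : ℕ → ℕ := fun n => [0, 0, a, b, c, d, e].getD n 0

set_option synthInstance.maxSize 100000 in
set_option maxHeartbeats 1000000 in
theorem ncore : ∀ x2 : Fin 3, x2.val ≠ 0 → ∀ y2 : Fin 3, y2.val ≠ 0 →
    ∀ x3 : Fin 3, nsub x3.val x2.val ≠ 0 → ∀ y3 : Fin 3, nsub y3.val y2.val ≠ 0 →
    ∀ x4 : Fin 3, nsub x4.val x3.val ≠ 0 → ∀ y4 : Fin 3, nsub y4.val y3.val ≠ 0 →
    ∀ x5 : Fin 3, nsub x5.val x4.val ≠ 0 → ∀ y5 : Fin 3, nsub y5.val y4.val ≠ 0 →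
    ∀ x6 : Fin 3, nsub x6.val x5.val ≠ 0 → ∀ y6 : Fin 3, nsub y6.val y5.val ≠ 0 →
    x6.val ≠ 0 → y6.val ≠ 0 →
    (∀ m, m ≤ 8 → nwL (gX x2.val x3.val x4.val x5.val x6.val)
        (gX y2.val y3.val y4.val y5.val y6.val) 7 m = 0) →
    x3.val = 0 ∧ x4.val = x2.val ∧ x5.val = 0 ∧ x6.val = x2.val ∧
      y3.val = 0 ∧ y4.val = y2.val ∧ y5.val = 0 ∧ y6.val = y2.val := by
  decide

def gA (t : ℕ) : ℕ → ℕ := gX t 0 t 0 t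

def mkF (a b c d e : F3) : ℕ → F3 := fun n => [0, 0, a, b, c, d, e].getD n 0

def bX (a : F3) : ℕ → F3 := mkF a 0 a 0 a

lemma stepR_zero : ∀ m, stepR (fun _ => (0:F3)) 0 m = 0 := by
  intro m; rcases m with _|_|_|_|_|_|_|_|_|m <;> simp [stepR]

set_option synthInstance.maxSize 100000 in
set_option maxHeartbeats 1000000 in
theorem bcore : ∀ a : Fin 3, a.val ≠ 0 → ∀ c : Fin 3, c.val ≠ 0 →
    (∀ m, 2 ≤ m → m ≤ 8 → nwR (gA a.val) (gA c.val) 6 m = 0) ∧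
    (∀ i < 7, ∀ j < 7, 1 ≤ i → i < j →
      ¬ ∀ m, m ≤ 8 → nwL (gA a.val) (gA c.val) i m = nwL (gA a.val) (gA c.val) j m) ∧
    (∀ i < 7, ∀ j < 7, 1 ≤ i → i < j →
      ¬ ∀ m, m ≤ 8 → nwR (gA a.val) (gA c.val) i m = nwR (gA a.val) (gA c.val) j m) := by
  decide



def bL (a c : F3) (i : ℕ) : PVec F3 8 :=
  ⟨wL (bX a) (bX c) (if 7 ≤ i then 1 else i), fun m hm => wL_van _ _ _ m hm⟩

def bR (a c : F3) (i : ℕ) : PVec F3 8 :=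
  ⟨wR (bX a) (bX c) (if 7 ≤ i then 1 else i), fun m hm => wR_van _ _ _ m hm⟩

end L83

open L83 in
/-- Characterization of the 12-cycles (of given type) of `Λ(8,3)` through the edge
joining the two all-zero vertices. -/
theorem lambda83_cycle_type_iff (u v : ℕ → ZMod 3)
    (hne : ∀ i, 1 ≤ i → i ≤ 6 → u i ≠ 0 ∧ v i ≠ 0) :
    hasCycleOfType (ZMod 3) 8 6 u v ↔
      ∃ a c : ZMod 3, a ≠ 0 ∧ c ≠ 0 ∧
        u 1 = a ∧ v 1 = c ∧ u 2 = -a ∧ v 2 = -c ∧ u 3 = a ∧ v 3 = c ∧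
        u 4 = -a ∧ v 4 = -c ∧ u 5 = a ∧ v 5 = c ∧ u 6 = -a ∧ v 6 = -c := by
  constructor
  · rintro ⟨L, R, hL1, hR1, hL7, hR7, ha1, ha2, -, -, hu, hv⟩
    set X : ℕ → F3 := mkF ((L 2).1 0) ((L 3).1 0) ((L 4).1 0) ((L 5).1 0) ((L 6).1 0) with hXdef
    set Y : ℕ → F3 := mkF ((R 2).1 0) ((R 3).1 0) ((R 4).1 0) ((R 5).1 0) ((R 6).1 0) with hYdef
    have hLw1 : (L 1).1 = wL X Y 1 := funext fun m => hL1 m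
    have hRw1 : (R 1).1 = wR X Y 1 := by
      have h := funext (right_eq (L 1).1 (R 1).1 (ha1 1 le_rfl (by norm_num)) (R 1).2)
      rw [hLw1, hR1 0] at h; exact h
    have hLw2 : (L 2).1 = wL X Y 2 := by
      have h := funext (left_eq (L (1+1)).1 (R 1).1 (ha2 1 le_rfl (by norm_num)) (L (1+1)).2)
      rw [hRw1] at h; exact h
    have hRw2 : (R 2).1 = wR X Y 2 := by
      have h := funext (right_eq (L 2).1 (R 2).1 (ha1 2 (by norm_num) (by norm_num)) (R 2).2)
      rw [hLw2] at h; exact h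
    have hLw3 : (L 3).1 = wL X Y 3 := by
      have h := funext (left_eq (L (2+1)).1 (R 2).1 (ha2 2 (by norm_num) (by norm_num)) (L (2+1)).2)
      rw [hRw2] at h; exact h
    have hRw3 : (R 3).1 = wR X Y 3 := by
      have h := funext (right_eq (L 3).1 (R 3).1 (ha1 3 (by norm_num) (by norm_num)) (R 3).2)
      rw [hLw3] at h; exact h
    have hLw4 : (L 4).1 = wL X Y 4 := by
      have h := funext (left_eq (L (3+1)).1 (R 3).1 (ha2 3 (by norm_num) (by norm_num)) (L (3+1)).2)
      rw [hRw3] at h; exact h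
    have hRw4 : (R 4).1 = wR X Y 4 := by
      have h := funext (right_eq (L 4).1 (R 4).1 (ha1 4 (by norm_num) (by norm_num)) (R 4).2)
      rw [hLw4] at h; exact h
    have hLw5 : (L 5).1 = wL X Y 5 := by
      have h := funext (left_eq (L (4+1)).1 (R 4).1 (ha2 4 (by norm_num) (by norm_num)) (L (4+1)).2)
      rw [hRw4] at h; exact h
    have hRw5 : (R 5).1 = wR X Y 5 := by
      have h := funext (right_eq (L 5).1 (R 5).1 (ha1 5 (by norm_num) (by norm_num)) (R 5).2)
      rw [hLw5] at h; exact h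
    have hLw6 : (L 6).1 = wL X Y 6 := by
      have h := funext (left_eq (L (5+1)).1 (R 5).1 (ha2 5 (by norm_num) (by norm_num)) (L (5+1)).2)
      rw [hRw5] at h; exact h
    have hRw6 : (R 6).1 = wR X Y 6 := by
      have h := funext (right_eq (L 6).1 (R 6).1 (ha1 6 (by norm_num) le_rfl) (R 6).2)
      rw [hLw6] at h; exact h
    have hLw7 : (L 1).1 = stepL (wR X Y 6) 0 := by
      have h := funext (left_eq (L (6+1)).1 (R 6).1 (ha2 6 (by norm_num) le_rfl) (L (6+1)).2)
      rw [hL7] at h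
      rw [hRw6, hL1 0] at h
      exact h
    have hcl : ∀ m, m ≤ 8 → wL X Y 7 m = 0 := fun m _ =>
      (congrFun hLw7 m).symm.trans (hL1 m)
    set X' : ℕ → ℕ := gX ((L 2).1 0).val ((L 3).1 0).val ((L 4).1 0).val ((L 5).1 0).val
      ((L 6).1 0).val with hX'def
    set Y' : ℕ → ℕ := gX ((R 2).1 0).val ((R 3).1 0).val ((R 4).1 0).val ((R 5).1 0).val
      ((R 6).1 0).val with hY'def
    have hgx : ∀ i, X' i = (X i).val := by intro i; rcases i with _|_|_|_|_|_|_|i <;> rfl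
    have hgy : ∀ i, Y' i = (Y i).val := by intro i; rcases i with _|_|_|_|_|_|_|i <;> rfl
    have hclN : ∀ m, m ≤ 8 → nwL X' Y' 7 m = 0 := fun m hm => by
      rw [nwL_val X Y X' Y' hgx hgy 7 m, hcl m hm]; rfl
    have hu1 := hu 1 le_rfl (by norm_num)
    have hu2 := hu 2 (by norm_num) (by norm_num)
    have hu3 := hu 3 (by norm_num) (by norm_num)
    have hu4 := hu 4 (by norm_num) (by norm_num)
    have hu5 := hu 5 (by norm_num) (by norm_num)
    have hu6 := hu 6 (by norm_num) le_rfl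
    have hv1 := hv 1 le_rfl (by norm_num)
    have hv2 := hv 2 (by norm_num) (by norm_num)
    have hv3 := hv 3 (by norm_num) (by norm_num)
    have hv4 := hv 4 (by norm_num) (by norm_num)
    have hv5 := hv 5 (by norm_num) (by norm_num)
    have hv6 := hv 6 (by norm_num) le_rfl
    rw [hL1 0, sub_zero] at hu1
    rw [hR1 0, sub_zero] at hv1
    rw [hL7, hL1 0, zero_sub] at hu6
    rw [hR7, hR1 0, zero_sub] at hv6
    have nx2 : (X 2).val ≠ 0 :=
      val_ne3 _ fun h => (hne 1 le_rfl (by norm_num)).1 (hu1.trans h)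
    have ny2 : (Y 2).val ≠ 0 :=
      val_ne3 _ fun h => (hne 1 le_rfl (by norm_num)).2 (hv1.trans h)
    have nx3 : nsub (X 3).val (X 2).val ≠ 0 := by
      rw [← val_sub3]
      exact val_ne3 _ fun h => (hne 2 (by norm_num) (by norm_num)).1 (hu2.trans h)
    have ny3 : nsub (Y 3).val (Y 2).val ≠ 0 := by
      rw [← val_sub3]
      exact val_ne3 _ fun h => (hne 2 (by norm_num) (by norm_num)).2 (hv2.trans h)
    have nx4 : nsub (X 4).val (X 3).val ≠ 0 := by
      rw [← val_sub3]
      exact val_ne3 _ fun h => (hne 3 (by norm_num) (by norm_num)).1 (hu3.trans h)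
    have ny4 : nsub (Y 4).val (Y 3).val ≠ 0 := by
      rw [← val_sub3]
      exact val_ne3 _ fun h => (hne 3 (by norm_num) (by norm_num)).2 (hv3.trans h)
    have nx5 : nsub (X 5).val (X 4).val ≠ 0 := by
      rw [← val_sub3]
      exact val_ne3 _ fun h => (hne 4 (by norm_num) (by norm_num)).1 (hu4.trans h)
    have ny5 : nsub (Y 5).val (Y 4).val ≠ 0 := by
      rw [← val_sub3]
      exact val_ne3 _ fun h => (hne 4 (by norm_num) (by norm_num)).2 (hv4.trans h)
    have nx6 : nsub (X 6).val (X 5).val ≠ 0 := by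
      rw [← val_sub3]
      exact val_ne3 _ fun h => (hne 5 (by norm_num) (by norm_num)).1 (hu5.trans h)
    have ny6 : nsub (Y 6).val (Y 5).val ≠ 0 := by
      rw [← val_sub3]
      exact val_ne3 _ fun h => (hne 5 (by norm_num) (by norm_num)).2 (hv5.trans h)
    have nx6' : (X 6).val ≠ 0 :=
      val_ne3 _ fun h => (hne 6 (by norm_num) le_rfl).1
        (hu6.trans (by rw [show (L 6).1 0 = (0:F3) from h, neg_zero]))
    have ny6' : (Y 6).val ≠ 0 :=
      val_ne3 _ fun h => (hne 6 (by norm_num) le_rfl).2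
        (hv6.trans (by rw [show (R 6).1 0 = (0:F3) from h, neg_zero]))
    obtain ⟨c3, c4, c5, c6, d3, d4, d5, d6⟩ :=
      ncore (X 2) nx2 (Y 2) ny2 (X 3) nx3 (Y 3) ny3 (X 4) nx4 (Y 4) ny4
        (X 5) nx5 (Y 5) ny5 (X 6) nx6 (Y 6) ny6 nx6' ny6' hclN
    have rX3 : (L 3).1 0 = (0:F3) := val_zero3 _ c3
    have rX4 : (L 4).1 0 = (L 2).1 0 := val_inj3 _ _ c4
    have rX5 : (L 5).1 0 = (0:F3) := val_zero3 _ c5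
    have rX6 : (L 6).1 0 = (L 2).1 0 := val_inj3 _ _ c6
    have rY3 : (R 3).1 0 = (0:F3) := val_zero3 _ d3
    have rY4 : (R 4).1 0 = (R 2).1 0 := val_inj3 _ _ d4
    have rY5 : (R 5).1 0 = (0:F3) := val_zero3 _ d5
    have rY6 : (R 6).1 0 = (R 2).1 0 := val_inj3 _ _ d6
    refine ⟨u 1, v 1, (hne 1 le_rfl (by norm_num)).1, (hne 1 le_rfl (by norm_num)).2,
      rfl, rfl, ?_, ?_, ?_, ?_, ?_, ?_, ?_, ?_, ?_, ?_⟩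
    · linear_combination hu2 + hu1 + rX3
    · linear_combination hv2 + hv1 + rY3
    · linear_combination hu3 - hu1 + rX4 - rX3
    · linear_combination hv3 - hv1 + rY4 - rY3
    · linear_combination hu4 + hu1 + rX5 - rX4
    · linear_combination hv4 + hv1 + rY5 - rY4
    · linear_combination hu5 - hu1 + rX6 - rX5
    · linear_combination hv5 - hv1 + rY6 - rY5
    · linear_combination hu6 + hu1 - rX6
    · linear_combination hv6 + hv1 - rY6
  · rintro ⟨a, c, ha, hc, hu1, hv1, hu2, hv2, hu3, hv3, hu4, hv4, hu5, hv5, hu6, hv6⟩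
    have haN : a.val ≠ 0 := val_ne3 a ha
    have hcN : c.val ≠ 0 := val_ne3 c hc
    have hgx : ∀ i, gA a.val i = (bX a i).val := by
      intro i; rcases i with _|_|_|_|_|_|_|i <;> rfl
    have hgy : ∀ i, gA c.val i = (bX c i).val := by
      intro i; rcases i with _|_|_|_|_|_|_|i <;> rfl
    obtain ⟨hR6N, hdL, hdR⟩ := bcore a haN c hcN
    have hR6 : ∀ m, 2 ≤ m → m ≤ 8 → wR (bX a) (bX c) 6 m = 0 := fun m h2 h8 =>
      val_zero3 _ (by rw [← nwR_val (bX a) (bX c) _ _ hgx hgy 6 m]; exact hR6N m h2 h8)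
    refine ⟨bL a c, bR a c, fun m => rfl, fun m => stepR_zero m, rfl, rfl, ?_, ?_, ?_, ?_, ?_, ?_⟩
    · intro i h1 h6
      show lamAdjLR 8 (bL a c i).1 (bR a c i).1
      exact adjR _ _ (wL_one_two _ _ _)
    · intro i h1 h6
      show lamAdjLR 8 (bL a c (i+1)).1 (bR a c i).1
      interval_cases i
      · exact adjL (wR (bX a) (bX c) 1) (bX a 2) rfl
      · exact adjL (wR (bX a) (bX c) 2) (bX a 3) rfl
      · exact adjL (wR (bX a) (bX c) 3) (bX a 4) rfl
      · exact adjL (wR (bX a) (bX c) 4) (bX a 5) rfl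
      · exact adjL (wR (bX a) (bX c) 5) (bX a 6) rfl
      · refine ⟨rfl, rfl, fun i h2 h8 => ⟨fun _ => ?_, fun _ => ?_⟩⟩
        · show (0:F3) + wR (bX a) (bX c) 6 i = wR (bX a) (bX c) 6 0 * 0
          rw [hR6 i h2 h8]; ring
        · show (0:F3) + wR (bX a) (bX c) 6 i = 0 * wR (bX a) (bX c) 6 (i - 2)
          rw [hR6 i h2 h8]; ring
    · intro i j h1 hij hj6 heq
      refine hdL i (by omega) j (by omega) h1 hij fun m hm => ?_
      have h := congrFun (congrArg Subtype.val heq) m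
      simp only [bL] at h
      rw [if_neg (show ¬ 7 ≤ i by omega), if_neg (show ¬ 7 ≤ j by omega)] at h
      exact ((nwL_val (bX a) (bX c) _ _ hgx hgy i m).trans
        (congrArg ZMod.val h)).trans (nwL_val (bX a) (bX c) _ _ hgx hgy j m).symm
    · intro i j h1 hij hj6 heq
      refine hdR i (by omega) j (by omega) h1 hij fun m hm => ?_
      have h := congrFun (congrArg Subtype.val heq) m
      simp only [bR] at h
      rw [if_neg (show ¬ 7 ≤ i by omega), if_neg (show ¬ 7 ≤ j by omega)] at h
      exact ((nwR_val (bX a) (bX c) _ _ hgx hgy i m).trans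
        (congrArg ZMod.val h)).trans (nwR_val (bX a) (bX c) _ _ hgx hgy j m).symm
    · intro i h1 h6
      interval_cases i
      · rw [hu1]; show a = a - (0:F3); rw [sub_zero]
      · rw [hu2]; show -a = 0 - a; rw [zero_sub]
      · rw [hu3]; show a = a - (0:F3); rw [sub_zero]
      · rw [hu4]; show -a = 0 - a; rw [zero_sub]
      · rw [hu5]; show a = a - (0:F3); rw [sub_zero]
      · rw [hu6]; show -a = 0 - a; rw [zero_sub]
    · intro i h1 h6
      interval_cases i
      · rw [hv1]; show c = c - (0:F3); rw [sub_zero]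
      · rw [hv2]; show -c = 0 - c; rw [zero_sub]
      · rw [hv3]; show c = c - (0:F3); rw [sub_zero]
      · rw [hv4]; show -c = 0 - c; rw [zero_sub]
      · rw [hv5]; show c = c - (0:F3); rw [sub_zero]
      · rw [hv6]; show -c = 0 - c; rw [zero_sub]
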